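/- Let B = B(a,b|α,β) ⊆ ℕ^n be a PLP base set. Then B satisfies the left-sided strong symmetric exchange property: for all u, v ∈ B and every index i with u_i < v_i and u_1+⋯+u_{i−1} > v_1+⋯+v_{i−1}, there exists j ≤ i−1 with u_j > v_j such that both u − e_j + e_i ∈ B and v + e_j − e_i ∈ B. Symmetrically, B satisfies the right-sided strong symmetric exchange property: for all u, v ∈ B and every i with u_i < v_i and u_{i+1}+⋯+u_n > v_{i+1}+⋯+v_n, there exists j ≥ i+1 with u_j > v_j such that u − e_j + e_i ∈ B and v + e_j − e_i ∈ B. -/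

import Mathlib

open Finset

/-- `u - e i + e j` (exchange move on integer vectors). -/
def exch {n : ℕ} (u : Fin n → ℕ) (i j : Fin n) : Fin n → ℕ :=
  fun l => if l = i then u l - 1 else if l = j then u l + 1 else u l

lemma exch_sum {n : ℕ} (u : Fin n → ℕ) (p q : Fin n) (hpq : p ≠ q) (hp : 1 ≤ u p)
    (s : Finset (Fin n)) :
    (∑ l ∈ s, exch u p q l) + (if p ∈ s then 1 else 0)
      = (∑ l ∈ s, u l) + (if q ∈ s then 1 else 0) := by
  have h1 : (∑ l ∈ s, (exch u p q l + if p = l then 1 else 0))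
      = ∑ l ∈ s, (u l + if q = l then 1 else 0) := by
    apply Finset.sum_congr rfl
    intro l _
    unfold exch
    by_cases hlp : l = p
    · subst hlp
      simp [Ne.symm hpq]
      omega
    · by_cases hlq : l = q
      · subst hlq
        simp [hlp, hpq]
      · simp [hlp, hlq, Ne.symm hlp, Ne.symm hlq]
  rw [Finset.sum_add_distrib, Finset.sum_add_distrib] at h1
  rwa [Finset.sum_ite_eq s p (fun _ => 1), Finset.sum_ite_eq s q (fun _ => 1)] at h1

lemma mem_exch {n : ℕ} (a b α β : Fin n → ℕ) (u : Fin n → ℕ)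
    (hu : ∀ i : Fin n, (a i ≤ u i ∧ u i ≤ b i)
      ∧ (α i ≤ ∑ j ∈ Finset.Iic i, u j ∧ (∑ j ∈ Finset.Iic i, u j) ≤ β i))
    (p q : Fin n) (hpq : p ≠ q)
    (hap : a p + 1 ≤ u p) (hbq : u q + 1 ≤ b q)
    (hs1 : ∀ k : Fin n, p ≤ k → ¬ q ≤ k → α k + 1 ≤ ∑ j ∈ Finset.Iic k, u j)
    (hs2 : ∀ k : Fin n, q ≤ k → ¬ p ≤ k → (∑ j ∈ Finset.Iic k, u j) + 1 ≤ β k) :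
    ∀ i : Fin n, (a i ≤ exch u p q i ∧ exch u p q i ≤ b i)
      ∧ (α i ≤ ∑ j ∈ Finset.Iic i, exch u p q j
        ∧ (∑ j ∈ Finset.Iic i, exch u p q j) ≤ β i) := by
  intro k
  constructor
  · have h1 := (hu k).1
    unfold exch
    by_cases hkp : k = p
    · subst hkp; simp [hpq]; omega
    · by_cases hkq : k = q
      · subst hkq; simp [hkp]; omega
      · simp [hkp, hkq]; omega
  · have key := exch_sum u p q hpq (by omega) (Finset.Iic k)
    simp only [Finset.mem_Iic] at key
    have h2 := (hu k).2
    by_cases hpk : p ≤ k <;> by_cases hqk : q ≤ k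
    · simp [hpk, hqk] at key; omega
    · have := hs1 k hpk hqk
      simp [hpk, hqk] at key; omega
    · have := hs2 k hqk hpk
      simp [hpk, hqk] at key; omega
    · simp [hpk, hqk] at key; omega

/-- a PLP base set satisfies the left-sided and the right-sided
strong symmetric exchange property. -/
theorem PLP_two_sided_SSEP {n d : ℕ} (hn : 0 < n) (hd : 0 < d)
    (a b α β : Fin n → ℕ)
    (hαm : Monotone α) (hβm : Monotone β)
    (hlast : ∀ i : Fin n, (i : ℕ) = n - 1 → α i = d ∧ β i = d)
    (hαβ : ∀ i, α i ≤ β i)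
    (B : Set (Fin n → ℕ))
    (hB : B = { u : Fin n → ℕ | ∀ i : Fin n,
      (a i ≤ u i ∧ u i ≤ b i) ∧
      (α i ≤ ∑ j ∈ Finset.Iic i, u j ∧ (∑ j ∈ Finset.Iic i, u j) ≤ β i) }) :
    (∀ u ∈ B, ∀ v ∈ B, ∀ i : Fin n, u i < v i →
        (∑ j ∈ Finset.Iio i, v j) < (∑ j ∈ Finset.Iio i, u j) →
        ∃ j : Fin n, j < i ∧ v j < u j ∧ exch u j i ∈ B ∧ exch v i j ∈ B) ∧
    (∀ u ∈ B, ∀ v ∈ B, ∀ i : Fin n, u i < v i →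
        (∑ j ∈ Finset.Ioi i, v j) < (∑ j ∈ Finset.Ioi i, u j) →
        ∃ j : Fin n, i < j ∧ v j < u j ∧ exch u j i ∈ B ∧ exch v i j ∈ B) := by
  subst hB
  constructor
  · -- left-sided
    intro u hu v hv i hui hsum
    simp only [Set.mem_setOf_eq] at hu hv ⊢
    set s : Finset (Fin n) := (Finset.Iio i).filter (fun l => v l < u l) with hs
    have hne : s.Nonempty := by
      by_contra hne
      have hle : ∀ l ∈ Finset.Iio i, u l ≤ v l := by
        intro l hl
        by_contra hc
        exact hne ⟨l, Finset.mem_filter.mpr ⟨hl, by omega⟩⟩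
      exact absurd (Finset.sum_le_sum hle) (by omega)
    set j : Fin n := s.max' hne with hj
    have hjs : j ∈ s := s.max'_mem hne
    have hji : j < i := (Finset.mem_Iio.mp (Finset.mem_filter.mp hjs).1)
    have hvuj : v j < u j := (Finset.mem_filter.mp hjs).2
    have hmax : ∀ l : Fin n, l < i → v l < u l → l ≤ j := by
      intro l hl hvl
      exact Finset.le_max' s l (Finset.mem_filter.mpr ⟨Finset.mem_Iio.mpr hl, hvl⟩)
    -- key claim: for j ≤ k < i, strict inequality of partial sums
    have hkey : ∀ k : Fin n, j ≤ k → k < i →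
        (∑ l ∈ Finset.Iic k, v l) < ∑ l ∈ Finset.Iic k, u l := by
      intro k hjk hki
      have hki' : (k : ℕ) < (i : ℕ) := hki
      have hun : Finset.Iio i = Finset.Iic k ∪ Finset.Ioo k i := by
        ext l
        simp only [Finset.mem_Iio, Finset.mem_union, Finset.mem_Iic, Finset.mem_Ioo,
          Fin.lt_def, Fin.le_def]
        omega
      have hdisj : Disjoint (Finset.Iic k) (Finset.Ioo k i) := by
        rw [Finset.disjoint_left]
        intro l h1 h2
        simp only [Finset.mem_Iic, Fin.le_def] at h1
        simp only [Finset.mem_Ioo, Fin.lt_def] at h2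
        omega
      rw [hun, Finset.sum_union hdisj, Finset.sum_union hdisj] at hsum
      have hioo : (∑ l ∈ Finset.Ioo k i, u l) ≤ ∑ l ∈ Finset.Ioo k i, v l := by
        apply Finset.sum_le_sum
        intro l hl
        simp only [Finset.mem_Ioo] at hl
        by_contra hc
        have hlj := hmax l hl.2 (by omega)
        exact absurd (lt_of_le_of_lt hjk hl.1) (not_lt.mpr hlj)
      omega
    refine ⟨j, hji, hvuj, ?_, ?_⟩
    · -- exch u j i ∈ B
      apply mem_exch a b α β u hu j i (ne_of_lt hji)
      · have := (hv j).1.1; omega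
      · have := (hv i).1.2; omega
      · intro k hjk hik
        have hki : k < i := lt_of_not_ge hik
        have := hkey k hjk hki
        have := (hv k).2.1
        omega
      · intro k hik hjk
        exact absurd (le_trans (le_of_lt hji) hik) hjk
    · -- exch v i j ∈ B
      apply mem_exch a b α β v hv i j (ne_of_gt hji)
      · have := (hu i).1.1; omega
      · have := (hu j).1.2; omega
      · intro k hik hjk
        exact absurd (le_trans (le_of_lt hji) hik) hjk
      · intro k hjk hik
        have hki : k < i := lt_of_not_ge hik
        have := hkey k hjk hki
        have := (hu k).2.2
        omega
  · -- right-sided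
    intro u hu v hv i hui hsum
    simp only [Set.mem_setOf_eq] at hu hv ⊢
    set s : Finset (Fin n) := (Finset.Ioi i).filter (fun l => v l < u l) with hs
    have hne : s.Nonempty := by
      by_contra hne
      have hle : ∀ l ∈ Finset.Ioi i, u l ≤ v l := by
        intro l hl
        by_contra hc
        exact hne ⟨l, Finset.mem_filter.mpr ⟨hl, by omega⟩⟩
      exact absurd (Finset.sum_le_sum hle) (by omega)
    set j : Fin n := s.min' hne with hj
    have hjs : j ∈ s := s.min'_mem hne
    have hij : i < j := (Finset.mem_Ioi.mp (Finset.mem_filter.mp hjs).1)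
    have hvuj : v j < u j := (Finset.mem_filter.mp hjs).2
    have hmin : ∀ l : Fin n, i < l → v l < u l → j ≤ l := by
      intro l hl hvl
      exact Finset.min'_le s l (Finset.mem_filter.mpr ⟨Finset.mem_Ioi.mpr hl, hvl⟩)
    -- total sums equal d
    set L : Fin n := ⟨n - 1, by omega⟩ with hL
    have hIicL : Finset.Iic L = Finset.univ := by
      ext l
      simp only [Finset.mem_Iic, Finset.mem_univ, iff_true, Fin.le_def]
      show (l : ℕ) ≤ n - 1
      have := l.isLt; omega
    obtain ⟨hαL, hβL⟩ := hlast L rfl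
    have htotu : (∑ l ∈ Finset.univ, u l) = d := by
      have := (hu L).2; rw [hIicL] at this; omega
    have htotv : (∑ l ∈ Finset.univ, v l) = d := by
      have := (hv L).2; rw [hIicL] at this; omega
    have hsplit : ∀ w : Fin n → ℕ, ∀ k : Fin n,
        (∑ l ∈ Finset.Iic k, w l) + (∑ l ∈ Finset.Ioi k, w l) = ∑ l ∈ Finset.univ, w l := by
      intro w k
      rw [← Finset.sum_union (by
        rw [Finset.disjoint_left]
        intro l h1 h2
        simp only [Finset.mem_Iic, Fin.le_def] at h1
        simp only [Finset.mem_Ioi, Fin.lt_def] at h2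
        omega)]
      congr 1
      ext l
      simp only [Finset.mem_union, Finset.mem_Iic, Finset.mem_Ioi, Finset.mem_univ, iff_true,
        Fin.le_def, Fin.lt_def]
      omega
    -- key claim: for i ≤ k < j, strict inequality of partial sums
    have hkey : ∀ k : Fin n, i ≤ k → k < j →
        (∑ l ∈ Finset.Iic k, u l) < ∑ l ∈ Finset.Iic k, v l := by
      intro k hik hkj
      have hik' : (i : ℕ) ≤ (k : ℕ) := hik
      have hun : Finset.Ioi i = Finset.Ioc i k ∪ Finset.Ioi k := by
        ext l
        simp only [Finset.mem_Ioi, Finset.mem_union, Finset.mem_Ioc,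
          Fin.lt_def, Fin.le_def]
        omega
      have hdisj : Disjoint (Finset.Ioc i k) (Finset.Ioi k) := by
        rw [Finset.disjoint_left]
        intro l h1 h2
        simp only [Finset.mem_Ioc, Fin.le_def, Fin.lt_def] at h1
        simp only [Finset.mem_Ioi, Fin.lt_def] at h2
        omega
      rw [hun, Finset.sum_union hdisj, Finset.sum_union hdisj] at hsum
      have hioc : (∑ l ∈ Finset.Ioc i k, u l) ≤ ∑ l ∈ Finset.Ioc i k, v l := by
        apply Finset.sum_le_sum
        intro l hl
        simp only [Finset.mem_Ioc] at hl
        by_contra hc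
        have hlj := hmin l hl.1 (by omega)
        exact absurd (lt_of_le_of_lt hl.2 hkj) (not_lt.mpr hlj)
      have h1 := hsplit u k
      have h2 := hsplit v k
      omega
    refine ⟨j, hij, hvuj, ?_, ?_⟩
    · -- exch u j i ∈ B
      apply mem_exch a b α β u hu j i (ne_of_gt hij)
      · have := (hv j).1.1; omega
      · have := (hv i).1.2; omega
      · intro k hjk hik
        exact absurd (le_trans (le_of_lt hij) hjk) hik
      · intro k hik hjk
        have hkj : k < j := lt_of_not_ge hjk
        have := hkey k hik hkj
        have := (hv k).2.2
        omega
    · -- exch v i j ∈ B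
      apply mem_exch a b α β v hv i j (ne_of_lt hij)
      · have := (hu i).1.1; omega
      · have := (hu j).1.2; omega
      · intro k hik hjk
        have hkj : k < j := lt_of_not_ge hjk
        have := hkey k hik hkj
        have := (hu k).2.1
        omega
      · intro k hjk hik
        exact absurd (le_trans (le_of_lt hij) hjk) hik
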